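/- Let G be a finite strongly connected directed multigraph, π ∈ ℕ^V positive with Δπ = 0, G̃ the multigraph replacing each edge e from u to v by π_u parallel copies, and w a fixed vertex. Then the number of Eulerian tours of G̃ starting at w equals the number of π-Eulerian tours of G starting at w multiplied by Π_{v∈V} (π_v!)^{d_v}. -/

import Mathlib

open Finset

structure Multigraph (V E : Type) where
  tail : E → V
  head : E → V

namespace Multigraph

variable {V E : Type} [Fintype V] [Fintype E] [DecidableEq V] [DecidableEq E]

/-- Outdegree of a vertex. -/
def outdeg (G : Multigraph V E) (v : V) : ℕ :=
  (Finset.univ.filter (fun e => G.tail e = v)).card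

/-- Indegree of a vertex. -/
def indeg (G : Multigraph V E) (v : V) : ℕ :=
  (Finset.univ.filter (fun e => G.head e = v)).card

/-- Number of edges from `u` to `v`. -/
def edgeCount (G : Multigraph V E) (u v : V) : ℕ :=
  (Finset.univ.filter (fun e => G.tail e = u ∧ G.head e = v)).card

/-- Directed graph Laplacian: `Δ u v = d_v δ_{uv} − d_{vu}`. -/
def laplacian (G : Multigraph V E) : Matrix V V ℤ :=
  fun u v => (if u = v then (G.outdeg v : ℤ) else 0) - (G.edgeCount v u : ℤ)

def Adj (G : Multigraph V E) (u v : V) : Prop := ∃ e, G.tail e = u ∧ G.head e = v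

/-- Strong connectivity: every vertex reaches every other by a directed path. -/
def StronglyConnected (G : Multigraph V E) : Prop :=
  ∀ u v : V, Relation.ReflTransGen G.Adj u v

/-- A list of edges forms a walk: consecutive edges are incident. -/
def IsWalk (G : Multigraph V E) : List E → Prop
  | [] => True
  | [_] => True
  | e :: f :: rest => G.head e = G.tail f ∧ G.IsWalk (f :: rest)

/-- A nonempty walk that returns to its starting vertex. -/
def IsClosedWalk (G : Multigraph V E) (w : List E) : Prop :=
  w ≠ [] ∧ G.IsWalk w ∧ w.getLast?.map G.head = w.head?.map G.tail

/-- The walk starts at vertex `v`. -/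
def StartsAt (G : Multigraph V E) (w : List E) (v : V) : Prop :=
  w.head?.map G.tail = some v

/-- A π-Eulerian tour: closed walk using each edge `e` exactly `π (tail e)` times. -/
def IsPiEulerian (G : Multigraph V E) (π : V → ℕ) (w : List E) : Prop :=
  G.IsClosedWalk w ∧ ∀ e : E, w.count e = π (G.tail e)

/-- An Eulerian tour: closed walk using each edge exactly once. -/
def IsEulerian (G : Multigraph V E) (w : List E) : Prop :=
  G.IsClosedWalk w ∧ ∀ e : E, w.count e = 1

/-- A multi-Eulerian tour: closed walk using each edge at least once, and edges
with the same tail equally often. -/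
def IsMultiEulerian (G : Multigraph V E) (w : List E) : Prop :=
  G.IsClosedWalk w ∧ (∀ e : E, 1 ≤ w.count e) ∧
  ∀ e f : E, G.tail e = G.tail f → w.count e = w.count f

/-- A spanning tree oriented toward `w`: every vertex other than `w` has exactly one
outgoing edge, `w` has none, and every vertex reaches `w` inside the subgraph. -/
def IsTreeTo (G : Multigraph V E) (w : V) (T : Finset E) : Prop :=
  (∀ v, v ≠ w → (T.filter (fun e => G.tail e = v)).card = 1) ∧
  (∀ e ∈ T, G.tail e ≠ w) ∧
  ∀ v : V, Relation.ReflTransGen (fun a b => ∃ e ∈ T, G.tail e = a ∧ G.head e = b) v w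

/-- Number of spanning trees oriented toward `w`. -/
noncomputable def treeCount (G : Multigraph V E) (w : V) : ℕ :=
  Nat.card {T : Finset E // G.IsTreeTo w T}

end Multigraph

namespace StmtHelpers

variable {E : Type} [DecidableEq E] {n : E → ℕ}

def sel (n : E → ℕ) (e : E) : List (Σ f, Fin (n f)) → List (Fin (n e))
  | [] => []
  | ⟨f, i⟩ :: t => if h : f = e then (h ▸ i) :: sel n e t else sel n e t

def combine (n : E → ℕ) (d : ∀ e, Fin (n e)) :
    List E → (∀ e, List (Fin (n e))) → List (Σ f, Fin (n f))
  | [], _ => []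
  | e :: t, σ => ⟨e, (σ e).headD (d e)⟩ :: combine n d t (Function.update σ e (σ e).tail)

theorem sel_cons_self (e : E) (i : Fin (n e)) (t) :
    sel n e (⟨e, i⟩ :: t) = i :: sel n e t := by
  rw [sel, dif_pos rfl]

theorem sel_cons_ne {f e : E} (h : f ≠ e) (i : Fin (n f)) (t) :
    sel n e (⟨f, i⟩ :: t) = sel n e t := by
  rw [sel, dif_neg h]

theorem count_sel (e : E) (i : Fin (n e)) :
    ∀ l : List (Σ f, Fin (n f)), (sel n e l).count i = l.count ⟨e, i⟩
  | [] => rfl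
  | ⟨f, j⟩ :: t => by
    by_cases h : f = e
    · subst h
      rw [sel_cons_self]
      simp [List.count_cons, count_sel _ i t, Sigma.ext_iff]
    · rw [sel_cons_ne h]
      simp [List.count_cons, count_sel _ i t, Sigma.ext_iff, h]

theorem length_sel (e : E) :
    ∀ l : List (Σ f, Fin (n f)), (sel n e l).length = (l.map Sigma.fst).count e
  | [] => rfl
  | ⟨f, j⟩ :: t => by
    by_cases h : f = e
    · subst h; rw [sel_cons_self]; simp [List.count_cons, length_sel _ t]
    · rw [sel_cons_ne h]; simp [List.count_cons, length_sel _ t, h]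

theorem map_fst_combine (d : ∀ e, Fin (n e)) :
    ∀ (L : List E) (σ), (combine n d L σ).map Sigma.fst = L
  | [], _ => rfl
  | e :: t, σ => by simp [combine, map_fst_combine d t]

theorem sel_combine (d : ∀ e, Fin (n e)) :
    ∀ (L : List E) (σ) (_ : ∀ e, L.count e ≤ (σ e).length) (e : E),
      sel n e (combine n d L σ) = (σ e).take (L.count e)
  | [], σ, _, e => by simp [combine, sel]
  | f :: t, σ, h, e => by
    have hne : σ f ≠ [] := by
      intro hnil
      have := h f
      rw [hnil] at this
      simp [List.count_cons] at this
    obtain ⟨a, u, ha⟩ := List.exists_cons_of_ne_nil hne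
    have h' : ∀ e', t.count e' ≤ ((Function.update σ f (σ f).tail) e').length := by
      intro e'
      by_cases hef : e' = f
      · subst hef
        rw [Function.update_self]
        have := h e'
        rw [ha] at this ⊢
        simp [List.count_cons] at this ⊢
        omega
      · rw [Function.update_of_ne hef]
        have := h e'
        simp [List.count_cons, hef] at this
        omega
    by_cases hef : f = e
    · subst hef
      rw [combine, sel_cons_self, sel_combine d t _ h' f, Function.update_self, ha]
      simp [List.count_cons]
    · rw [combine, sel_cons_ne hef, sel_combine d t _ h' e,
        Function.update_of_ne (Ne.symm hef)]
      simp [List.count_cons, Ne.symm hef, hef]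

theorem combine_sel (d : ∀ e, Fin (n e)) :
    ∀ (l : List (Σ f, Fin (n f))) (σ) (_ : ∀ e, σ e = sel n e l),
      combine n d (l.map Sigma.fst) σ = l
  | [], σ, h => rfl
  | ⟨f, i⟩ :: t, σ, h => by
    rw [List.map_cons, combine]
    congr 1
    · rw [h f, sel_cons_self]; rfl
    · apply combine_sel d t
      intro e
      by_cases hef : e = f
      · subst hef
        rw [Function.update_self, h e, sel_cons_self]; rfl
      · rw [Function.update_of_ne hef, h e, sel_cons_ne (Ne.symm hef)]

theorem length_of_count_one {m : ℕ} {u : List (Fin m)} (h : ∀ i, u.count i = 1) :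
    u.length = m := by
  have hd : u.Nodup := List.nodup_iff_count_le_one.mpr fun i => (h i).le
  have ht : u.toFinset = Finset.univ := by
    ext i
    simp only [List.mem_toFinset, Finset.mem_univ, iff_true]
    by_contra hi
    have h0 : u.count i = 0 := List.count_eq_zero.mpr hi
    rw [h i] at h0
    exact one_ne_zero h0
  rw [← List.toFinset_card_of_nodup hd, ht, Finset.card_univ, Fintype.card_fin]

theorem card_lists_count_one (m : ℕ) :
    Nat.card {u : List (Fin m) // ∀ i, u.count i = 1} = m.factorial := by
  have h1 : ∀ u : List (Fin m),
      (∀ i, u.count i = 1) ↔ u ∈ (List.finRange m).permutations := by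
    intro u
    rw [List.mem_permutations, List.perm_iff_count]
    constructor
    · intro h i
      rw [h i, List.count_eq_one_of_mem (List.nodup_finRange m) (List.mem_finRange i)]
    · intro h i
      rw [h i, List.count_eq_one_of_mem (List.nodup_finRange m) (List.mem_finRange i)]
  rw [Nat.card_congr (Equiv.subtypeEquivRight h1)]
  have hnd : (List.finRange m).permutations.Nodup :=
    List.nodup_permutations _ (List.nodup_finRange m)
  rw [Nat.card_congr (hnd.getEquiv _).symm]
  simp [Nat.card_eq_fintype_card, List.length_permutations, List.length_finRange]



def lift {V E : Type} (G : Multigraph V E) (n : E → ℕ) : Multigraph V (Σ e, Fin (n e)) :=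
  ⟨fun p => G.tail p.1, fun p => G.head p.1⟩

theorem isWalk_lift {V E : Type} (G : Multigraph V E) (n : E → ℕ) :
    ∀ l : List (Σ e, Fin (n e)), (lift G n).IsWalk l ↔ G.IsWalk (l.map Sigma.fst)
  | [] => Iff.rfl
  | [p] => Iff.rfl
  | p :: q :: t => by
    simp only [Multigraph.IsWalk, List.map_cons]
    rw [isWalk_lift G n (q :: t)]
    exact Iff.rfl

theorem isClosedWalk_lift {V E : Type} (G : Multigraph V E) (n : E → ℕ)
    (l : List (Σ e, Fin (n e))) :
    (lift G n).IsClosedWalk l ↔ G.IsClosedWalk (l.map Sigma.fst) := by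
  unfold Multigraph.IsClosedWalk
  rw [isWalk_lift]
  simp only [ne_eq, List.map_eq_nil_iff, List.head?_map, List.getLast?_map, Option.map_map]
  exact Iff.rfl

theorem startsAt_lift {V E : Type} (G : Multigraph V E) (n : E → ℕ)
    (l : List (Σ e, Fin (n e))) (v : V) :
    (lift G n).StartsAt l v ↔ G.StartsAt (l.map Sigma.fst) v := by
  unfold Multigraph.StartsAt
  rw [List.head?_map, Option.map_map]
  exact Iff.rfl

theorem card_lift_eulerian {V E : Type} [Fintype E] [DecidableEq E]
    (G : Multigraph V E) (n : E → ℕ) (hn : ∀ e, 0 < n e) (w : V) :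
    Nat.card {l : List (Σ e, Fin (n e)) //
        (lift G n).IsEulerian l ∧ (lift G n).StartsAt l w} =
      Nat.card {L : List E //
        (G.IsClosedWalk L ∧ ∀ e, L.count e = n e) ∧ G.StartsAt L w} *
        ∏ e : E, (n e).factorial := by
  classical
  let d : ∀ e, Fin (n e) := fun e => ⟨0, hn e⟩
  let eqv : {l : List (Σ e, Fin (n e)) // (lift G n).IsEulerian l ∧ (lift G n).StartsAt l w} ≃
      {L : List E // (G.IsClosedWalk L ∧ ∀ e, L.count e = n e) ∧ G.StartsAt L w} ×
      (∀ e : E, {u : List (Fin (n e)) // ∀ i, u.count i = 1}) :=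
    { toFun := fun x =>
        (⟨x.1.map Sigma.fst, ⟨⟨(isClosedWalk_lift G n x.1).mp x.2.1.1, fun e => by
            have hcount : ∀ i, (sel n e x.1).count i = 1 := fun i => by
              rw [count_sel]; exact x.2.1.2 ⟨e, i⟩
            rw [← length_sel, length_of_count_one hcount]⟩,
          (startsAt_lift G n x.1 w).mp x.2.2⟩⟩,
         fun e => ⟨sel n e x.1, fun i => by rw [count_sel]; exact x.2.1.2 ⟨e, i⟩⟩)
      invFun := fun x =>
        ⟨combine n d x.1.1 (fun e => (x.2 e).1), by
          have hlen : ∀ e, x.1.1.count e ≤ ((x.2 e).1).length := fun e => by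
            rw [x.1.2.1.2 e, length_of_count_one (x.2 e).2]
          have hsel : ∀ e, sel n e (combine n d x.1.1 (fun e => (x.2 e).1)) = (x.2 e).1 := by
            intro e
            rw [sel_combine d _ _ hlen e, x.1.2.1.2 e]
            exact List.take_of_length_le (length_of_count_one (x.2 e).2).le
          refine ⟨⟨(isClosedWalk_lift G n _).mpr ?_, fun p => ?_⟩,
            (startsAt_lift G n _ w).mpr ?_⟩
          · rw [map_fst_combine]; exact x.1.2.1.1
          · obtain ⟨e, i⟩ := p
            rw [← count_sel, hsel e]; exact (x.2 e).2 i
          · rw [map_fst_combine]; exact x.1.2.2⟩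
      left_inv := fun x => by
        apply Subtype.ext
        exact combine_sel d x.1 _ fun e => rfl
      right_inv := fun x => by
        have hlen : ∀ e, x.1.1.count e ≤ ((x.2 e).1).length := fun e => by
          rw [x.1.2.1.2 e, length_of_count_one (x.2 e).2]
        refine Prod.ext ?_ ?_
        · exact Subtype.ext (map_fst_combine d _ _)
        · funext e
          apply Subtype.ext
          show sel n e (combine n d (↑x.1) fun e => ↑(x.2 e)) = ↑(x.2 e)
          rw [sel_combine d _ _ hlen e, x.1.2.1.2 e]
          exact List.take_of_length_le (length_of_count_one (x.2 e).2).le }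
  rw [Nat.card_congr eqv, Nat.card_prod, Nat.card_pi]
  congr 1
  exact Finset.prod_congr rfl fun e _ => card_lists_count_one (n e)

theorem prod_tail {V E : Type} [Fintype V] [Fintype E] [DecidableEq V]
    (G : Multigraph V E) (f : V → ℕ) :
    ∏ e : E, f (G.tail e) = ∏ v : V, f v ^ G.outdeg v := by
  rw [← Finset.prod_fiberwise' Finset.univ G.tail f]
  exact Finset.prod_congr rfl fun v _ => by
    rw [Finset.prod_const, Multigraph.outdeg]

end StmtHelpers

theorem stmt15 {V E : Type} [Fintype V] [Fintype E] [DecidableEq V] [DecidableEq E]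
    (G : Multigraph V E) (hsc : G.StronglyConnected)
    (π : V → ℕ) (hπ : ∀ v, 0 < π v)
    (hker : G.laplacian.mulVec (fun v => (π v : ℤ)) = 0) (w : V) :
    letI Gt : Multigraph V (Σ e : E, Fin (π (G.tail e))) :=
      ⟨fun p => G.tail p.1, fun p => G.head p.1⟩
    Nat.card {l : List (Σ e : E, Fin (π (G.tail e))) //
        Gt.IsEulerian l ∧ Gt.StartsAt l w} =
      Nat.card {l : List E // G.IsPiEulerian π l ∧ G.StartsAt l w} *
        ∏ v : V, (π v).factorial ^ G.outdeg v := by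
  have key := StmtHelpers.card_lift_eulerian G (fun e => π (G.tail e)) (fun e => hπ _) w
  have hp : ∏ e : E, (π (G.tail e)).factorial = ∏ v : V, (π v).factorial ^ G.outdeg v :=
    StmtHelpers.prod_tail G fun v => (π v).factorial
  exact key.trans (by rw [hp]; rfl)
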